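/- Let (V, B) be a finite-dimensional symmetric bilinear space over a field F of characteristic 2 admitting a totally isotropic subspace of half the dimension. Then V has a basis with respect to which the Gram matrix of B has block form [[0, I], [I, A]] for some symmetric matrix A. -/

import Mathlib

/-- A metabolic nondegenerate symmetric bilinear form over a field of characteristic 2
has a basis in which its Gram matrix has block form `[[0, I], [I, A]]` with `A` symmetric. -/
theorem exists_basis_gram_fromBlocks (F : Type*) [Field F] [CharP F 2]
    (V : Type*) [AddCommGroup V] [Module F V] [FiniteDimensional F V]
    (B : LinearMap.BilinForm F V)
    (hsymm : ∀ x y : V, B x y = B y x)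
    (hnd : Function.Injective fun v : V => B v)
    (W : Submodule F V)
    (hiso : ∀ w ∈ W, ∀ w' ∈ W, B w w' = 0)
    (hdim : 2 * Module.finrank F W = Module.finrank F V) :
    ∃ (n : ℕ) (b : Module.Basis (Fin n ⊕ Fin n) F V) (A : Matrix (Fin n) (Fin n) F),
      A.IsSymm ∧ BilinForm.toMatrix b B = Matrix.fromBlocks 0 1 1 A := by
  classical
  set n := Module.finrank F W with hn
  let e : Module.Basis (Fin n) F W := Module.finBasis F W
  -- B : V →ₗ Dual V is surjective
  have hBsurj : Function.Surjective (B : V →ₗ[F] Module.Dual F V) := by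
    rw [← LinearMap.injective_iff_surjective_of_finrank_eq_finrank
      (Subspace.dual_finrank_eq (V := V)).symm]
    exact hnd
  -- restriction to W is surjective
  have hres : Function.Surjective (W.subtype.dualMap) :=
    LinearMap.dualMap_surjective_of_injective W.injective_subtype
  -- choose f i with B (f i) restricted to W = coord i
  have hf : ∀ i : Fin n, ∃ v : V, ∀ w : W, B v (w : V) = e.coord i w := by
    intro i
    obtain ⟨φ, hφ⟩ := hres (e.coord i)
    obtain ⟨v, hv⟩ := hBsurj φ
    exact ⟨v, fun w => by
      have := congrFun (congrArg DFunLike.coe hφ) w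
      simp only [LinearMap.dualMap_apply, Submodule.coe_subtype] at this
      rw [hv]; exact this⟩
  choose f hfspec using hf
  have hBfe : ∀ i k, B (f i) ((e k : W) : V) = if k = i then 1 else 0 := by
    intro i k
    rw [hfspec i (e k)]
    simp [Module.Basis.coord_apply, Finsupp.single_apply]
  -- the candidate family
  let g : Fin n ⊕ Fin n → V := Sum.elim (fun i => ((e i : W) : V)) f
  have hli : LinearIndependent F g := by
    rw [Fintype.linearIndependent_iff]
    intro c hc
    -- pair with e k to kill f-coefficients
    have hc2 : ∀ k, c (Sum.inr k) = 0 := by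
      intro k
      have := congrArg (fun v => B v ((e k : W) : V)) hc
      simp only [map_sum, LinearMap.smul_apply, LinearMap.sum_apply, map_smul,
        LinearMap.map_smulₛₗ, RingHom.id_apply, map_zero, LinearMap.zero_apply] at this
      rw [Fintype.sum_sum_type] at this
      simp only [Sum.elim_inl, Sum.elim_inr, g] at this
      have h1 : ∀ i : Fin n, c (Sum.inl i) • B ((e i : W) : V) ((e k : W) : V) = 0 := by
        intro i
        rw [hiso _ (e i).2 _ (e k).2, smul_zero]
      rw [Finset.sum_congr rfl (fun i _ => h1 i)] at this
      simp only [Finset.sum_const_zero, zero_add] at this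
      have h2 : ∀ i : Fin n, c (Sum.inr i) • B (f i) ((e k : W) : V)
          = if k = i then c (Sum.inr i) else 0 := by
        intro i; rw [hBfe]; split <;> simp
      rw [Finset.sum_congr rfl (fun i _ => h2 i)] at this
      simpa using this
    -- now e-part
    have hc1 : ∀ k, c (Sum.inl k) = 0 := by
      have hsum : (∑ i, c (Sum.inl i) • (e i : W)) = 0 := by
        apply Subtype.val_injective
        push_cast
        have := hc
        rw [Fintype.sum_sum_type] at this
        simp only [Sum.elim_inl, Sum.elim_inr, g] at this
        simpa [hc2] using this
      have := Fintype.linearIndependent_iff.mp e.linearIndependent _ hsum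
      exact this
    rintro (k | k)
    exacts [hc1 k, hc2 k]
  have hcard : Fintype.card (Fin n ⊕ Fin n) = Module.finrank F V := by
    simp [← hdim, two_mul]
  rcases Nat.eq_zero_or_pos n with hn0 | hn0
  · haveI : IsEmpty (Fin n) := ⟨fun i => (Fin.cast hn0 i).elim0⟩
    haveI : Subsingleton V := by
      have : Module.finrank F V = 0 := by rw [← hdim, hn0, mul_zero]
      exact (Module.finrank_zero_iff (R := F)).mp this
    refine ⟨n, Module.Basis.empty V, 0, by simp [Matrix.IsSymm], ?_⟩
    ext j k
    exact isEmptyElim j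
  haveI : Nonempty (Fin n ⊕ Fin n) := ⟨Sum.inl ⟨0, hn0⟩⟩
  let b := basisOfLinearIndependentOfCardEqFinrank hli hcard
  have hb : ⇑b = g := coe_basisOfLinearIndependentOfCardEqFinrank hli hcard
  refine ⟨n, b, Matrix.of fun i j => B (f i) (f j), ?_, ?_⟩
  · exact Matrix.IsSymm.ext fun i j => hsymm (f j) (f i)
  · ext j k
    change (LinearMap.BilinForm.toMatrix b B : Matrix _ _ F) j k = _
    rw [BilinForm.toMatrix_apply, hb]
    rcases j with j | j <;> rcases k with k | k <;>
      simp only [Sum.elim_inl, Sum.elim_inr, g, Matrix.fromBlocks_apply₁₁,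
        Matrix.fromBlocks_apply₁₂, Matrix.fromBlocks_apply₂₁, Matrix.fromBlocks_apply₂₂]
    · exact hiso _ (e j).2 _ (e k).2
    · rw [hsymm, hBfe]; simp [Matrix.one_apply, eq_comm]
    · rw [hBfe]; simp [Matrix.one_apply, eq_comm]
    · rfl
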